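/- Let G be a connected graph of order n ≥ 2. If every vertex of G has a true twin, then ldim_f(G) ≥ n/2. -/

import Mathlib

open scoped Classical
open Finset

namespace FracLocal

/-- The local resolving neighborhood of a (potential) edge `uv`:
vertices whose distances to `u` and `v` differ. -/
noncomputable def locRes {V : Type*} [Fintype V] (G : SimpleGraph V) (u v : V) : Finset V :=
  Finset.univ.filter (fun x => G.dist x u ≠ G.dist x v)

/-- A local resolving function: values in `[0,1]` summing to at least `1`
on every local resolving neighborhood of an edge. -/
def IsLRF {V : Type*} [Fintype V] (G : SimpleGraph V) (f : V → ℝ) : Prop :=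
  (∀ x, 0 ≤ f x ∧ f x ≤ 1) ∧ ∀ u v, G.Adj u v → 1 ≤ ∑ x ∈ locRes G u v, f x

/-- The fractional local metric dimension. -/
noncomputable def ldimf {V : Type*} [Fintype V] (G : SimpleGraph V) : ℝ :=
  sInf {w : ℝ | ∃ f : V → ℝ, IsLRF G f ∧ w = ∑ x, f x}

/-- The (integral) local metric dimension. -/
noncomputable def ldim {V : Type*} [Fintype V] (G : SimpleGraph V) : ℕ :=
  sInf {k : ℕ | ∃ S : Finset V, S.card = k ∧
    ∀ u v, G.Adj u v → (S ∩ locRes G u v).Nonempty}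

/-- `l(G)`: the minimum cardinality of a local resolving neighborhood of an edge. -/
noncomputable def lG {V : Type*} [Fintype V] (G : SimpleGraph V) : ℕ :=
  sInf {k : ℕ | ∃ u v, G.Adj u v ∧ (locRes G u v).card = k}

/-- The closed neighborhood `N[u]`. -/
def closedNbhd {V : Type*} (G : SimpleGraph V) (u : V) : Set V :=
  insert u (G.neighborSet u)

/-- `u` and `v` are true twins: distinct vertices with `N[u] = N[v]`. -/
def TrueTwins {V : Type*} (G : SimpleGraph V) (u v : V) : Prop :=
  u ≠ v ∧ closedNbhd G u = closedNbhd G v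

end FracLocal


open FracLocal

section Aux
variable {V : Type*}

lemma dist_le_of_twins' {V : Type*} {G : SimpleGraph V} (hconn : G.Connected)
    {u v x : V} (hN : closedNbhd G u = closedNbhd G v) (hxu : x ≠ u) (hxv : x ≠ v) :
    G.dist x v ≤ G.dist x u := by
  obtain ⟨p, hp⟩ := (hconn x u).exists_walk_length_eq_dist
  cases hq : p.reverse with
  | nil =>
    have h0 : p.length = 0 := by
      have := congrArg SimpleGraph.Walk.length hq
      simpa using this
    exact absurd (SimpleGraph.Walk.eq_of_length_eq_zero h0) hxu
  | @cons _ w _ huw r =>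
    have hlen : p.length = r.length + 1 := by
      have := congrArg SimpleGraph.Walk.length hq
      simpa using this
    by_cases hwv : w = v
    · have hw : G.dist x w ≤ G.dist x u := by
        calc G.dist x w ≤ r.reverse.length := SimpleGraph.dist_le _
          _ ≤ p.length := by simp [hlen]
          _ = G.dist x u := hp
      rwa [hwv] at hw
    · have hwNu : w ∈ closedNbhd G u := Set.mem_insert_of_mem _ huw
      rw [hN] at hwNu
      rcases hwNu with h' | h'
      · exact absurd h' hwv
      · have hvw : G.Adj v w := h'
        calc G.dist x v ≤ (SimpleGraph.Walk.cons hvw r).reverse.length :=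
              SimpleGraph.dist_le _
          _ = p.length := by simp [hlen]
          _ = G.dist x u := hp

lemma locRes_subset_pair {V : Type*} [Fintype V] {G : SimpleGraph V} (hconn : G.Connected)
    {u v : V} (ht : TrueTwins G u v) : locRes G u v ⊆ {u, v} := by
  intro x hx
  simp only [locRes, Finset.mem_filter, Finset.mem_univ, true_and] at hx
  by_contra hc
  simp only [Finset.mem_insert, Finset.mem_singleton] at hc
  push_neg at hc
  exact hx (le_antisymm (dist_le_of_twins' hconn ht.2.symm hc.2 hc.1)
    (dist_le_of_twins' hconn ht.2 hc.1 hc.2))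

lemma class_sum {V : Type*} [Fintype V] (C : Finset V) (f : V → ℝ)
    (hcard : 2 ≤ C.card)
    (hpair : ∀ u ∈ C, ∀ v ∈ C, u ≠ v → 1 ≤ f u + f v) :
    (C.card : ℝ) / 2 ≤ ∑ x ∈ C, f x := by
  have hk : (2 : ℝ) ≤ (C.card : ℝ) := by exact_mod_cast hcard
  set k : ℝ := (C.card : ℝ) with hkdef
  set S : ℝ := ∑ x ∈ C, f x with hS
  have key : k * (k - 1) ≤ (2 * k - 2) * S := by
    have h1 : ∀ u ∈ C, (k - 1 : ℝ) ≤ ∑ v ∈ C.erase u, (f u + f v) := by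
      intro u hu
      have h2 : ∑ v ∈ C.erase u, (1 : ℝ) ≤ ∑ v ∈ C.erase u, (f u + f v) :=
        Finset.sum_le_sum (fun v hv => hpair u hu v (Finset.mem_of_mem_erase hv)
          (fun e => (Finset.ne_of_mem_erase hv) e.symm))
      have hce : ((C.erase u).card : ℝ) = k - 1 := by
        rw [Finset.card_erase_of_mem hu]
        have : 1 ≤ C.card := le_trans one_le_two hcard
        push_cast [Nat.cast_sub this]
        ring
      calc (k - 1 : ℝ) = ∑ v ∈ C.erase u, (1:ℝ) := by simp [hce]
        _ ≤ _ := h2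
    have h3 : ∀ u ∈ C, ∑ v ∈ C.erase u, (f u + f v) = (k - 1) * f u + (S - f u) := by
      intro u hu
      rw [Finset.sum_add_distrib, Finset.sum_const, Finset.sum_erase_eq_sub hu,
        Finset.card_erase_of_mem hu, nsmul_eq_mul]
      have : 1 ≤ C.card := le_trans one_le_two hcard
      push_cast [Nat.cast_sub this]
      ring
    have h4 : k * (k - 1) ≤ ∑ u ∈ C, ((k - 1) * f u + (S - f u)) := by
      calc k * (k - 1) = ∑ u ∈ C, (k - 1 : ℝ) := by simp [← hkdef]; ring
        _ ≤ ∑ u ∈ C, ∑ v ∈ C.erase u, (f u + f v) :=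
            Finset.sum_le_sum (fun u hu => h1 u hu)
        _ = ∑ u ∈ C, ((k - 1) * f u + (S - f u)) :=
            Finset.sum_congr rfl (fun u hu => h3 u hu)
    calc k * (k - 1) ≤ ∑ u ∈ C, ((k - 1) * f u + (S - f u)) := h4
      _ = (2 * k - 2) * S := by
          rw [Finset.sum_add_distrib, ← Finset.mul_sum, Finset.sum_sub_distrib,
            Finset.sum_const, nsmul_eq_mul, ← hS, ← hkdef]
          ring
  nlinarith [key, hk]

private lemma twins_adj {G : SimpleGraph V} {u v : V}
    (h : TrueTwins G u v) : G.Adj u v := by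
  obtain ⟨hne, hN⟩ := h
  have hv : v ∈ closedNbhd G v := Set.mem_insert _ _
  rw [← hN] at hv
  rcases hv with h' | h'
  · exact absurd h'.symm hne
  · exact h'

end Aux

open FracLocal in
/-- If every vertex of a connected graph `G` of order `n ≥ 2` has a
true twin, then `ldim_f(G) ≥ n/2`. -/
theorem stmt_4 {V : Type*} [Fintype V] (G : SimpleGraph V)
    (hconn : G.Connected) (hn : 2 ≤ Fintype.card V)
    (h : ∀ u : V, ∃ v : V, TrueTwins G u v) :
    (Fintype.card V : ℝ) / 2 ≤ ldimf G := by
  classical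
  set g : V → Finset V := fun x => insert x (G.neighborFinset x) with hg
  have hgkey : ∀ x y : V, g x = g y ↔ closedNbhd G x = closedNbhd G y := by
    intro x y
    have hx : (↑(g x) : Set V) = closedNbhd G x := by
      simp [hg, closedNbhd, SimpleGraph.neighborFinset_def, Set.coe_toFinset]
    have hy : (↑(g y) : Set V) = closedNbhd G y := by
      simp [hg, closedNbhd, SimpleGraph.neighborFinset_def, Set.coe_toFinset]
    rw [← hx, ← hy, Finset.coe_inj]
  have hpairf : ∀ f : V → ℝ, IsLRF G f → ∀ u v, TrueTwins G u v → 1 ≤ f u + f v := by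
    intro f hf u v ht
    have hadj := twins_adj ht
    have h1 := hf.2 u v hadj
    have h2 : ∑ x ∈ locRes G u v, f x ≤ ∑ x ∈ ({u, v} : Finset V), f x :=
      Finset.sum_le_sum_of_subset_of_nonneg (locRes_subset_pair hconn ht)
        (fun x _ _ => (hf.1 x).1)
    have hp : ∑ x ∈ ({u, v} : Finset V), f x = f u + f v := Finset.sum_pair ht.1
    linarith
  have hmain : ∀ f : V → ℝ, IsLRF G f → (Fintype.card V : ℝ) / 2 ≤ ∑ x, f x := by
    intro f hf
    have hsum : ∑ b : Finset V, ∑ a ∈ Finset.univ.filter (fun a => g a = b), f a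
        = ∑ a, f a := Finset.sum_fiberwise _ _ _
    have hcard : ∑ b : Finset V,
        ((Finset.univ.filter (fun a => g a = b)).card : ℝ) = (Fintype.card V : ℝ) := by
      have := Finset.sum_fiberwise Finset.univ g (fun _ => (1 : ℝ))
      simpa using this
    rw [← hsum, ← hcard, Finset.sum_div]
    apply Finset.sum_le_sum
    intro b _
    set C := Finset.univ.filter (fun a => g a = b) with hC
    rcases C.eq_empty_or_nonempty with hE | ⟨x, hx⟩
    · simp [hE]
    · obtain ⟨y, hyx, hyN⟩ := h x
      have hgb : g x = b := by simpa [hC] using hx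
      have hy : y ∈ C := by
        have : g y = b := by rw [← hgb]; exact ((hgkey y x).mpr hyN.symm)
        simp [hC, this]
      have h2 : 2 ≤ C.card :=
        Finset.one_lt_card.mpr ⟨x, hx, y, hy, hyx⟩
      refine class_sum C f h2 ?_
      intro u hu v hv huv
      have hgu : g u = b := by simpa [hC] using hu
      have hgv : g v = b := by simpa [hC] using hv
      exact hpairf f hf u v ⟨huv, (hgkey u v).mp (hgu.trans hgv.symm)⟩
  have hne : {w : ℝ | ∃ f : V → ℝ, IsLRF G f ∧ w = ∑ x, f x}.Nonempty := by
    refine ⟨∑ x : V, (1 : ℝ), fun _ => 1, ⟨fun x => ⟨zero_le_one, le_refl 1⟩, ?_⟩, rfl⟩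
    intro u v hadj
    have hu : u ∈ locRes G u v := by
      simp only [locRes, Finset.mem_filter, Finset.mem_univ, true_and]
      rw [SimpleGraph.dist_self, SimpleGraph.dist_eq_one_iff_adj.mpr hadj]
      exact zero_ne_one
    have : 1 ≤ ((locRes G u v).card : ℝ) := by
      exact_mod_cast Finset.card_pos.mpr ⟨u, hu⟩
    simpa using this
  refine le_csInf hne ?_
  rintro w ⟨f, hf, rfl⟩
  exact hmain f hf
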